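/- arXiv:2308.11575 — 4 statements merged into one kernel-verified Lean document; each statement's English description precedes it below -/
import Mathlib

section
/- The product formula holds: for all z, w ∈ ℂ, 3 s_0(z) s_0(w) = s_0(z + w) + s_0(z + ζ_2 w) + s_0(z + ζ_3 w), where ζ_2 and ζ_3 are the primitive cube roots of unity. -/
open Complex

noncomputable def ζ2 : ℂ := (-1 + Complex.I * Real.sqrt 3) / 2
noncomputable def ζ3 : ℂ := (-1 - Complex.I * Real.sqrt 3) / 2

/-- `s p z = (1/3) ∑_{k=1}^{3} ζ_k^{-p} e^{z ζ_k}` with `ζ_1 = 1`. -/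
noncomputable def s (p : ℕ) (z : ℂ) : ℂ :=
  (Complex.exp z + Complex.exp (z * ζ2) / ζ2 ^ p + Complex.exp (z * ζ3) / ζ3 ^ p) / 3

lemma sqrt3_sq : ((Real.sqrt 3 : ℝ) : ℂ) ^ 2 = 3 := by
  norm_cast
  rw [Real.sq_sqrt (by norm_num)]


lemma h22 : ζ2 * ζ2 = ζ3 := by
  unfold ζ2 ζ3
  linear_combination ((Complex.I ^ 2) / 4) * sqrt3_sq + (3 / 4) * Complex.I_sq

lemma h33 : ζ3 * ζ3 = ζ2 := by
  unfold ζ2 ζ3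
  linear_combination ((Complex.I ^ 2) / 4) * sqrt3_sq + (3 / 4) * Complex.I_sq

lemma h23 : ζ2 * ζ3 = 1 := by
  unfold ζ2 ζ3
  linear_combination (-(Complex.I ^ 2) / 4) * sqrt3_sq - (3 / 4) * Complex.I_sq

theorem s_product (z w : ℂ) :
    3 * s 0 z * s 0 w = s 0 (z + w) + s 0 (z + ζ2 * w) + s 0 (z + ζ3 * w) := by
  simp only [s, pow_zero, div_one]
  rw [show (z + w) * ζ2 = z * ζ2 + w * ζ2 from by ring,
      show (z + w) * ζ3 = z * ζ3 + w * ζ3 from by ring,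
      show (z + ζ2 * w) * ζ2 = z * ζ2 + w * ζ3 from by linear_combination w * h22,
      show (z + ζ2 * w) * ζ3 = z * ζ3 + w from by linear_combination w * h23,
      show (z + ζ3 * w) * ζ2 = z * ζ2 + w from by linear_combination w * h23,
      show (z + ζ3 * w) * ζ3 = z * ζ3 + w * ζ2 from by linear_combination w * h33,
      show z + ζ2 * w = z + w * ζ2 from by ring,
      show z + ζ3 * w = z + w * ζ3 from by ring]
  simp only [Complex.exp_add]
  ring
end

section
/- The duplication formulas hold for all z ∈ ℂ: 3 s_0(z)^2 = s_0(2z) + 2 s_0(−z); 3 s_1(z)^2 = s_2(2z) + 2 s_2(−z); 3 s_2(z)^2 = s_1(2z) + 2 s_1(−z). -/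
open Complex

theorem s_duplication (z : ℂ) :
    3 * s 0 z ^ 2 = s 0 (2 * z) + 2 * s 0 (-z) ∧
    3 * s 1 z ^ 2 = s 2 (2 * z) + 2 * s 2 (-z) ∧
    3 * s 2 z ^ 2 = s 1 (2 * z) + 2 * s 1 (-z) := by
  have hs : (Real.sqrt 3 : ℂ) ^ 2 = 3 := by
    rw [← Complex.ofReal_pow, Real.sq_sqrt (by norm_num : (3:ℝ) ≥ 0)]
    norm_num
  have hmul : ζ2 * ζ3 = 1 := by
    unfold ζ2 ζ3
    linear_combination (-Complex.I ^ 2 / 4) * hs + (-3 / 4 : ℂ) * Complex.I_sq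
  have hsum : ζ2 + ζ3 = -1 := by unfold ζ2 ζ3; ring
  have h22 : ζ2 ^ 2 = ζ3 := by linear_combination ζ2 * hsum - hmul - hsum
  have h32 : ζ3 ^ 2 = ζ2 := by linear_combination ζ3 * hsum - hmul - hsum
  have h2ne : ζ2 ≠ 0 := fun h => by simp [h] at hmul
  have h3ne : ζ3 ≠ 0 := fun h => by simp [h] at hmul
  set a := Complex.exp z with ha
  set b := Complex.exp (z * ζ2) with hb
  set c := Complex.exp (z * ζ3) with hc
  have e1 : Complex.exp (-z) = b * c := by
    rw [hb, hc, ← Complex.exp_add]; congr 1; linear_combination (-z) * hsum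
  have e2 : Complex.exp (-z * ζ2) = a * c := by
    rw [ha, hc, ← Complex.exp_add]; congr 1; linear_combination (-z) * hsum
  have e3 : Complex.exp (-z * ζ3) = a * b := by
    rw [ha, hb, ← Complex.exp_add]; congr 1; linear_combination (-z) * hsum
  have e4 : Complex.exp (2 * z) = a ^ 2 := by
    rw [ha, sq, ← Complex.exp_add, two_mul]
  have e5 : Complex.exp (2 * z * ζ2) = b ^ 2 := by
    rw [hb, sq, ← Complex.exp_add]; ring_nf
  have e6 : Complex.exp (2 * z * ζ3) = c ^ 2 := by
    rw [hc, sq, ← Complex.exp_add]; ring_nf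
  have d2a : ∀ x : ℂ, x / ζ2 = x * ζ3 := fun x => by
    rw [div_eq_iff h2ne]; linear_combination -x * hmul
  have d3a : ∀ x : ℂ, x / ζ3 = x * ζ2 := fun x => by
    rw [div_eq_iff h3ne]; linear_combination -x * hmul
  have d2b : ∀ x : ℂ, x / ζ2 ^ 2 = x * ζ3 ^ 2 := fun x => by
    rw [div_eq_iff (pow_ne_zero 2 h2ne)]; linear_combination -x * (ζ2 * ζ3 + 1) * hmul
  have d3b : ∀ x : ℂ, x / ζ3 ^ 2 = x * ζ2 ^ 2 := fun x => by
    rw [div_eq_iff (pow_ne_zero 2 h3ne)]; linear_combination -x * (ζ2 * ζ3 + 1) * hmul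
  refine ⟨?_, ?_, ?_⟩ <;>
    simp only [s, e1, e2, e3, e4, e5, e6, pow_zero, pow_one, div_one, d2a, d3a, d2b, d3b]
  · ring
  · linear_combination (-2*a*b/3) * h22 + (-2*a*c/3) * h32 + (2*b*c/3) * hmul
  · linear_combination (c^2*ζ2^2/3 + 2*a*c/3) * h22 + (b^2*ζ3^2/3 + 2*a*b/3) * h32 +
      (b^2*ζ3/3 + c^2*ζ2/3 + 2*b*c*(ζ2*ζ3+1)/3) * hmul
end

section
/- For all z, w ∈ ℂ, the Wronskian-type identity holds: s_2(z) s_1(w) − s_1(z) s_2(w) = (1/(i√3)) (s_0(z + ζ_2 w) − s_0(z + ζ_3 w)), where ζ_2 = (-1+i√3)/2, ζ_3 = (-1-i√3)/2. -/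
open Complex

theorem s_wronskian (z w : ℂ) :
    s 2 z * s 1 w - s 1 z * s 2 w
      = (1 / (Complex.I * Real.sqrt 3)) * (s 0 (z + ζ2 * w) - s 0 (z + ζ3 * w)) := by
  have ht : ((Real.sqrt 3 : ℂ)) ^ 2 = 3 := by
    rw [← Complex.ofReal_pow, Real.sq_sqrt (by norm_num : (3:ℝ) ≥ 0)]
    norm_num
  have hmul : ζ2 * ζ3 = 1 := by
    simp only [ζ2, ζ3]
    field_simp
    linear_combination ht - (Real.sqrt 3:ℂ)^2 * Complex.I_sq
  have h2 : ζ2 ≠ 0 := left_ne_zero_of_mul_eq_one hmul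
  have h3 : ζ3 ≠ 0 := right_ne_zero_of_mul_eq_one hmul
  have hsq2 : ζ2 ^ 2 = ζ3 := by
    simp only [ζ2, ζ3]
    field_simp
    linear_combination (-1:ℂ) * ht + (Real.sqrt 3:ℂ)^2 * Complex.I_sq
  have hsq3 : ζ3 ^ 2 = ζ2 := by
    simp only [ζ2, ζ3]
    field_simp
    linear_combination (-1:ℂ) * ht + (Real.sqrt 3:ℂ)^2 * Complex.I_sq
  have hcube2 : ζ2 ^ 3 = 1 := by linear_combination ζ2 * hsq2 + hmul
  have hcube3 : ζ3 ^ 3 = 1 := by linear_combination ζ3 * hsq3 + hmul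
  have hsum : ζ2 + ζ3 = -1 := by simp only [ζ2, ζ3]; ring
  have hdiff : ζ2 - ζ3 = Complex.I * Real.sqrt 3 := by
    simp only [ζ2, ζ3]; ring
  have hkey : (ζ2 - ζ3) ^ 2 = -3 := by
    rw [hdiff]
    linear_combination ((Real.sqrt 3:ℂ)^2) * Complex.I_sq - ht
  have hne : ζ2 - ζ3 ≠ 0 := by
    intro h
    rw [h] at hkey
    norm_num at hkey
  have hinv : (1 : ℂ) / (Complex.I * Real.sqrt 3) = (ζ3 - ζ2) / 3 := by
    rw [← hdiff, div_eq_div_iff hne (by norm_num : (3:ℂ) ≠ 0)]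
    linear_combination hkey
  have e1 : Complex.exp (z + ζ2 * w) = Complex.exp z * Complex.exp (w * ζ2) := by
    rw [← Complex.exp_add]; ring_nf
  have e2 : Complex.exp ((z + ζ2 * w) * ζ2) = Complex.exp (z * ζ2) * Complex.exp (w * ζ3) := by
    rw [← Complex.exp_add, ← hsq2]; ring_nf
  have e3 : Complex.exp ((z + ζ2 * w) * ζ3) = Complex.exp (z * ζ3) * Complex.exp w := by
    rw [← Complex.exp_add]
    linear_combination congrArg Complex.exp (by linear_combination w * hmul : (z + ζ2 * w) * ζ3 = z * ζ3 + w)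
  have f1 : Complex.exp (z + ζ3 * w) = Complex.exp z * Complex.exp (w * ζ3) := by
    rw [← Complex.exp_add]; ring_nf
  have f2 : Complex.exp ((z + ζ3 * w) * ζ2) = Complex.exp (z * ζ2) * Complex.exp w := by
    rw [← Complex.exp_add]
    linear_combination congrArg Complex.exp (by linear_combination w * hmul : (z + ζ3 * w) * ζ2 = z * ζ2 + w)
  have f3 : Complex.exp ((z + ζ3 * w) * ζ3) = Complex.exp (z * ζ3) * Complex.exp (w * ζ2) := by
    rw [← Complex.exp_add, ← hsq3]; ring_nf
  have d1 : ∀ x : ℂ, x / ζ2 = x * ζ3 := fun x => by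
    rw [div_eq_iff h2]; linear_combination -x * hmul
  have d2 : ∀ x : ℂ, x / ζ3 = x * ζ2 := fun x => by
    rw [div_eq_iff h3]; linear_combination -x * hmul
  have d3 : ∀ x : ℂ, x / ζ2 ^ 2 = x * ζ2 := fun x => by
    rw [div_eq_iff (pow_ne_zero 2 h2)]; linear_combination -x * hcube2
  have d4 : ∀ x : ℂ, x / ζ3 ^ 2 = x * ζ3 := fun x => by
    rw [div_eq_iff (pow_ne_zero 2 h3)]; linear_combination -x * hcube3
  simp only [s, pow_zero, pow_one, div_one, e1, e2, e3, f1, f2, f3, d1, d2, d3, d4, hinv]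
  linear_combination ((ζ2 - ζ3) * (Complex.exp (z * ζ2) * Complex.exp (w * ζ3)
    - Complex.exp (z * ζ3) * Complex.exp (w * ζ2)) / 9) * hsum
end

section
/- For real λ and l > 0, the equality s_1(iλl) = 0 together with s_2(iλl) = 0 implies λ = 0. -/
open Complex

theorem s1_s2_common_zero (lam l : ℝ) (hl : 0 < l)
    (h1 : s 1 (Complex.I * lam * l) = 0) (h2 : s 2 (Complex.I * lam * l) = 0) :
    lam = 0 := by
  set z : ℂ := Complex.I * lam * l with hz
  have hsq : (Real.sqrt 3 : ℂ) ^ 2 = 3 := by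
    norm_cast
    rw [Real.sq_sqrt]; norm_num
  have h3 : (Complex.I * Real.sqrt 3) ^ 2 = -3 := by
    rw [mul_pow, Complex.I_sq, hsq]; ring
  have hmul : ζ2 * ζ3 = 1 := by
    unfold ζ2 ζ3; linear_combination (-1/4 : ℂ) * h3
  have hζ2 : ζ2 ≠ 0 := left_ne_zero_of_mul_eq_one hmul
  have hζ3 : ζ3 ≠ 0 := right_ne_zero_of_mul_eq_one hmul
  have hζ2sq : ζ2 ^ 2 = ζ3 := by
    unfold ζ2 ζ3; linear_combination (1/4 : ℂ) * h3
  have hζ3sq : ζ3 ^ 2 = ζ2 := by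
    unfold ζ2 ζ3; linear_combination (1/4 : ℂ) * h3
  have h3pos : (0:ℝ) < Real.sqrt 3 := by positivity
  have hne : ζ3 - ζ2 ≠ 0 := by
    unfold ζ2 ζ3
    intro h
    have h0 : Complex.I * Real.sqrt 3 = 0 := by linear_combination -h
    rcases mul_eq_zero.mp h0 with h' | h'
    · exact Complex.I_ne_zero h'
    · exact absurd (Complex.ofReal_eq_zero.mp h') (ne_of_gt h3pos)
  unfold s at h1 h2
  field_simp at h1 h2
  -- h1 : (exp z * ζ2 + exp (z*ζ2)) * ζ3 + exp (z*ζ3) * ζ2 = 0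
  -- h2 : (exp z * ζ2^2 + exp (z*ζ2)) * ζ3^2 + exp (z*ζ3) * ζ2^2 = 0
  have h1' : Complex.exp z + Complex.exp (z * ζ2) * ζ3 + Complex.exp (z * ζ3) * ζ2 = 0 := by
    linear_combination h1 - Complex.exp z * hmul
  have h2' : Complex.exp z + Complex.exp (z * ζ2) * ζ2 + Complex.exp (z * ζ3) * ζ3 = 0 := by
    linear_combination h2 - Complex.exp z * (ζ2 * ζ3 + 1) * hmul
      - Complex.exp (z * ζ2) * hζ3sq - Complex.exp (z * ζ3) * hζ2sq
  have key : (Complex.exp (z * ζ2) - Complex.exp (z * ζ3)) * (ζ3 - ζ2) = 0 := by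
    linear_combination h1' - h2'
  have hBC : Complex.exp (z * ζ2) = Complex.exp (z * ζ3) :=
    sub_eq_zero.mp ((mul_eq_zero.mp key).resolve_right hne)
  have hzd : z * ζ2 - z * ζ3 = ((-(lam * l * Real.sqrt 3) : ℝ) : ℂ) := by
    unfold ζ2 ζ3
    rw [hz]
    push_cast
    linear_combination ((lam : ℂ) * l * Real.sqrt 3) * Complex.I_sq
  have hexp : Complex.exp ((-(lam * l * Real.sqrt 3) : ℝ) : ℂ) = 1 := by
    rw [← hzd, Complex.exp_sub, hBC, div_self (Complex.exp_ne_zero _)]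
  rw [← Complex.ofReal_exp] at hexp
  have hre : Real.exp (-(lam * l * Real.sqrt 3)) = 1 := by exact_mod_cast hexp
  have h0 : -(lam * l * Real.sqrt 3) = 0 := (Real.exp_eq_one_iff _).mp hre
  have : lam * (l * Real.sqrt 3) = 0 := by linarith [mul_assoc lam l (Real.sqrt 3)]
  rcases mul_eq_zero.mp this with h | h
  · exact h
  · nlinarith
end
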